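/- Fix k ∈ ℕ. If P ⊆ ℕ₀^k is a downset of k-tuples of nonnegative integers under the componentwise order, then there is a polynomial p(x) with rational coefficients such that f_P(n) = p(n) for all sufficiently large n, where f_P(n) = #{a ∈ P : a₁ + a₂ + ⋯ + a_k = n}. -/

import Mathlib

open Polynomial Finset

noncomputable section StanleyAux

/-- eventually polynomial -/
def EPoly (f : ℕ → ℚ) : Prop := ∃ (p : Polynomial ℚ) (N : ℕ), ∀ n ≥ N, f n = p.eval (n : ℚ)

lemma EPoly.congr {f g : ℕ → ℚ} (hf : EPoly f) (N₀ : ℕ) (h : ∀ n ≥ N₀, g n = f n) :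
    EPoly g := by
  obtain ⟨p, N, hp⟩ := hf
  exact ⟨p, max N N₀, fun n hn => (h n (le_trans (le_max_right _ _) hn)).trans
    (hp n (le_trans (le_max_left _ _) hn))⟩

lemma EPoly_sum {ι : Type*} (s : Finset ι) (F : ι → ℕ → ℚ)
    (h : ∀ i ∈ s, EPoly (F i)) : EPoly (fun n => ∑ i ∈ s, F i n) := by
  classical
  induction s using Finset.induction_on with
  | empty => exact ⟨0, 0, by simp⟩
  | insert a s hx ih =>
    obtain ⟨p, N, hp⟩ := h a (mem_insert_self a s)
    obtain ⟨q, M, hq⟩ := ih (fun i hi => h i (mem_insert_of_mem hi))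
    refine ⟨p + q, max N M, fun n hn => ?_⟩
    show ∑ i ∈ insert a s, F i n = _
    rw [Finset.sum_insert hx, eval_add, hp n (le_trans (le_max_left _ _) hn)]
    have := hq n (le_trans (le_max_right _ _) hn)
    simp only at this
    rw [this]

lemma EPoly.shift_sub {f : ℕ → ℚ} (hf : EPoly f) (c : ℕ) :
    EPoly (fun n => f (n - c)) := by
  obtain ⟨p, N, hp⟩ := hf
  refine ⟨p.comp (X - C (c : ℚ)), N + c, fun n hn => ?_⟩
  have hc : c ≤ n := le_trans (Nat.le_add_left _ _) hn
  have h1 : N ≤ n - c := by omega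
  show f (n - c) = _
  rw [hp _ h1, eval_comp]
  congr 1
  simp [Nat.cast_sub hc]

lemma EPoly.shift_one {f : ℕ → ℚ} (hf : EPoly f) :
    EPoly (fun n => f (n + 1)) := by
  obtain ⟨p, N, hp⟩ := hf
  refine ⟨p.comp (X + C 1), N, fun n hn => ?_⟩
  show f (n + 1) = _
  rw [hp _ (by omega), eval_comp]
  push_cast
  simp

lemma antideriv (q : Polynomial ℚ) :
    ∃ Q : Polynomial ℚ, ∀ n : ℕ, ∑ j ∈ range n, q.eval (j : ℚ) = Q.eval (n : ℚ) := by
  induction q using Polynomial.induction_on' with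
  | add p q hp hq =>
    obtain ⟨P, hP⟩ := hp
    obtain ⟨Q, hQ⟩ := hq
    exact ⟨P + Q, fun n => by simp [Finset.sum_add_distrib, hP n, hQ n]⟩
  | monomial p a =>
    refine ⟨C a * ∑ i ∈ range (p + 1),
      C (_root_.bernoulli i * ((p + 1).choose i) / (p + 1)) * X ^ (p + 1 - i), fun n => ?_⟩
    simp only [eval_monomial]
    rw [← Finset.mul_sum, mul_comm, sum_range_pow n p]
    rw [Finset.sum_mul, eval_mul, eval_C, eval_finset_sum, Finset.mul_sum]
    refine Finset.sum_congr rfl fun i _ => ?_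
    simp only [eval_mul, eval_C, eval_pow, eval_X]
    ring

lemma EPoly.partial_sum {g : ℕ → ℚ} (hg : EPoly g) :
    EPoly (fun n => ∑ j ∈ range n, g j) := by
  obtain ⟨q, N, hq⟩ := hg
  obtain ⟨Q, hQ⟩ := antideriv q
  refine ⟨Q + C (∑ j ∈ range N, g j - Q.eval (N : ℚ)), N, fun n hn => ?_⟩
  have hsplit : ∑ j ∈ range n, g j
      = ∑ j ∈ range N, g j + ∑ j ∈ Ico N n, g j := by
    rw [Finset.range_eq_Ico, Finset.range_eq_Ico]
    exact (Finset.sum_Ico_consecutive g (Nat.zero_le N) hn).symm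
  have h2 : ∑ j ∈ Ico N n, g j = ∑ j ∈ Ico N n, q.eval (j : ℚ) :=
    Finset.sum_congr rfl fun j hj => hq j (Finset.mem_Ico.mp hj).1
  have h3 : ∑ j ∈ Ico N n, q.eval (j : ℚ)
      = Q.eval (n : ℚ) - Q.eval (N : ℚ) := by
    rw [Finset.sum_Ico_eq_sub _ hn, hQ n, hQ N]
  show ∑ j ∈ range n, g j = _
  rw [hsplit, h2, h3, eval_add, eval_C]
  ring

/-- counting function of a set of tuples -/
noncomputable def cnt (k : ℕ) (P : Set (Fin k → ℕ)) (n : ℕ) : ℚ :=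
  (({a ∈ P | ∑ i, a i = n}).ncard : ℚ)

lemma cnt_eq_card (k : ℕ) (P : Set (Fin k → ℕ)) (n : ℕ) [DecidablePred (· ∈ P)] :
    cnt k P n = (((Finset.Nat.antidiagonalTuple k n).filter (· ∈ P)).card : ℚ) := by
  have : {a ∈ P | ∑ i, a i = n}
      = ↑((Finset.Nat.antidiagonalTuple k n).filter (· ∈ P)) := by
    ext a
    simp [Finset.Nat.mem_antidiagonalTuple, and_comm, Set.mem_setOf_eq]
  rw [cnt, this, Set.ncard_coe_finset]

lemma stabilize {k : ℕ} (D : ℕ → Set (Fin k → ℕ))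
    (hdown : ∀ m, ∀ a b : Fin k → ℕ, (∀ i, a i ≤ b i) → b ∈ D m → a ∈ D m)
    (hanti : ∀ m, D (m + 1) ⊆ D m) :
    ∃ M, ∀ m ≥ M, D m = D M := by
  have hmono : ∀ ⦃a b : ℕ⦄, a ≤ b → D b ⊆ D a := by
    intro a b hab
    induction hab with
    | refl => exact subset_rfl
    | step h ih => exact fun x hx => ih (hanti _ hx)
  by_contra hcon
  push_neg at hcon
  choose next hnextge hnextne using hcon
  set φ : ℕ → ℕ := fun i => next^[i] 0 with hφ
  have hφsucc : ∀ i, φ (i + 1) = next (φ i) := fun i => Function.iterate_succ_apply' next i 0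
  have hφmono : Monotone φ := monotone_nat_of_le_succ fun i => by
    rw [hφsucc]; exact hnextge (φ i)
  have hx : ∀ i, ∃ x, x ∈ D (φ i) ∧ x ∉ D (φ (i + 1)) := by
    intro i
    rw [hφsucc]
    by_contra hno
    push_neg at hno
    exact hnextne (φ i) (le_antisymm (hmono (hnextge (φ i))) fun x hx => hno x hx)
  choose x hxmem hxnot using hx
  have hpwo : (Set.univ : Set (Fin k → ℕ)).IsPWO :=
    Set.isPWO_of_wellQuasiOrderedLE _
  obtain ⟨i, j, hij, hle⟩ := hpwo (fun n => ⟨x n, trivial⟩)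
  have : x j ∈ D (φ (i + 1)) := hmono (hφmono hij) (hxmem j)
  exact hxnot i (hdown _ _ _ hle this)

lemma cnt_succ (k : ℕ) (P : Set (Fin (k + 1) → ℕ)) (n : ℕ) :
    cnt (k + 1) P n = ∑ m ∈ range (n + 1), cnt k {b | Fin.cons m b ∈ P} (n - m) := by
  classical
  rw [cnt_eq_card]
  have hset : (Finset.Nat.antidiagonalTuple (k + 1) n).filter (· ∈ P)
      = (range (n + 1)).biUnion (fun m =>
          ((Finset.Nat.antidiagonalTuple k (n - m)).filter
            (· ∈ ({b | Fin.cons m b ∈ P} : Set (Fin k → ℕ)))).image (Fin.cons m)) := by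
    ext a
    simp only [Finset.mem_filter, Finset.Nat.mem_antidiagonalTuple, Finset.mem_biUnion,
      Finset.mem_range, Finset.mem_image, Set.mem_setOf_eq]
    constructor
    · rintro ⟨hsum, hP⟩
      have h0 : a 0 ≤ n := by
        rw [← hsum, Fin.sum_univ_succ]; exact Nat.le_add_right _ _
      refine ⟨a 0, by omega, Fin.tail a, ⟨?_, ?_⟩, Fin.cons_self_tail a⟩
      · rw [Fin.sum_univ_succ] at hsum
        simp only [Fin.tail]
        omega
      · rw [Fin.cons_self_tail]; exact hP
    · rintro ⟨m, hm, b, ⟨hbsum, hbP⟩, rfl⟩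
      constructor
      · rw [Fin.sum_univ_succ, Fin.cons_zero]
        simp only [Fin.cons_succ]
        omega
      · exact hbP
  rw [hset, Finset.card_biUnion]
  · push_cast
    refine Finset.sum_congr rfl fun m _ => ?_
    rw [Finset.card_image_of_injective _
      (Fin.cons_right_injective (α := fun _ : Fin (k + 1) => ℕ) m), cnt_eq_card]
  · intro m _ m' _ hmm'
    simp only [Finset.disjoint_left, Finset.mem_image]
    rintro a ⟨b, _, rfl⟩ ⟨b', _, hb'⟩
    have h0 := congrFun hb' 0
    simp only [Fin.cons_zero] at h0
    exact hmm' h0.symm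

lemma EPoly.add' {f g : ℕ → ℚ} (hf : EPoly f) (hg : EPoly g) :
    EPoly (fun n => f n + g n) := by
  obtain ⟨p, N, hp⟩ := hf
  obtain ⟨q, M, hq⟩ := hg
  refine ⟨p + q, max N M, fun n hn => ?_⟩
  show f n + g n = _
  rw [eval_add, hp n (le_trans (le_max_left _ _) hn), hq n (le_trans (le_max_right _ _) hn)]

lemma main_lemma : ∀ (k : ℕ) (P : Set (Fin k → ℕ)),
    (∀ a b : Fin k → ℕ, (∀ i, a i ≤ b i) → b ∈ P → a ∈ P) → EPoly (cnt k P) := by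
  intro k
  induction k with
  | zero =>
    intro P _
    refine ⟨0, 1, fun n hn => ?_⟩
    have h0 : {a ∈ P | ∑ i : Fin 0, a i = n} = ∅ := by
      ext a
      simp only [Set.mem_setOf_eq, Set.mem_empty_iff_false, iff_false, not_and]
      intro _
      simp
      omega
    unfold cnt
    rw [h0]
    simp
  | succ k ih =>
    intro P hdown
    set D : ℕ → Set (Fin k → ℕ) := fun m => {b | Fin.cons m b ∈ P} with hD
    have hconsle : ∀ (m m' : ℕ) (a b : Fin k → ℕ), m ≤ m' → (∀ i, a i ≤ b i) →
        ∀ i, (Fin.cons m a : Fin (k + 1) → ℕ) i ≤ (Fin.cons m' b : Fin (k + 1) → ℕ) i := by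
      intro m m' a b hmm' hab i
      refine Fin.cases ?_ ?_ i
      · simpa using hmm'
      · intro j; simpa using hab j
    have hDdown : ∀ m, ∀ a b : Fin k → ℕ, (∀ i, a i ≤ b i) → b ∈ D m → a ∈ D m :=
      fun m a b hab hb => hdown _ _ (hconsle m m a b le_rfl hab) hb
    have hDanti : ∀ m, D (m + 1) ⊆ D m := fun m b hb =>
      hdown _ _ (hconsle m (m + 1) b b (Nat.le_succ m) fun i => le_rfl) hb
    obtain ⟨M, hM⟩ := stabilize D hDdown hDanti
    set g : ℕ → ℕ → ℚ := fun m => cnt k (D m) with hg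
    have hgE : ∀ m, EPoly (g m) := fun m => ih (D m) (hDdown m)
    set S : ℕ → ℚ := fun t => ∑ j ∈ range t, g M j with hS
    have hE : EPoly (fun n => (∑ m ∈ range M, g m (n - m)) + S (n - M + 1)) := by
      refine EPoly.add' ?_ ?_
      · exact EPoly_sum (range M) (fun m n => g m (n - m))
          (fun m _ => (hgE m).shift_sub m)
      · exact ((hgE M).partial_sum.shift_one).shift_sub M
    refine hE.congr M fun n hn => ?_
    rw [cnt_succ]
    have hsplit : ∑ m ∈ range (n + 1), cnt k {b | Fin.cons m b ∈ P} (n - m)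
        = ∑ m ∈ range M, g m (n - m) + ∑ m ∈ Ico M (n + 1), g m (n - m) := by
      rw [Finset.range_eq_Ico, Finset.range_eq_Ico]
      exact (Finset.sum_Ico_consecutive (fun m => g m (n - m)) (Nat.zero_le M) (by omega)).symm
    rw [hsplit]
    congr 1
    have h1 : ∑ m ∈ Ico M (n + 1), g m (n - m) = ∑ m ∈ Ico M (n + 1), g M (n - m) :=
      Finset.sum_congr rfl fun m hm => by
        rw [hg]
        simp only
        rw [hM m (Finset.mem_Ico.mp hm).1]
    rw [h1, Finset.sum_Ico_eq_sum_range]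
    have hL : n + 1 - M = (n - M + 1) := by omega
    rw [hL]
    have h2 : ∑ i ∈ range (n - M + 1), g M (n - (M + i))
        = ∑ i ∈ range (n - M + 1), g M ((n - M + 1) - 1 - i) :=
      Finset.sum_congr rfl fun i hi => by
        congr 1
        have := Finset.mem_range.mp hi
        omega
    rw [h2, Finset.sum_range_reflect]

end StanleyAux

/-- Stanley.  For a downset `P ⊆ ℕ₀^k` under the componentwise order,
the counting function `f_P(n) = #{a ∈ P : a₁ + ⋯ + a_k = n}` eventually agrees with a
rational polynomial. -/
theorem stmt_16 (k : ℕ) (P : Set (Fin k → ℕ))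
    (hdown : ∀ a b : Fin k → ℕ, (∀ i, a i ≤ b i) → b ∈ P → a ∈ P) :
    ∃ (p : Polynomial ℚ) (N : ℕ), ∀ n ≥ N,
      ({a ∈ P | ∑ i, a i = n}.ncard : ℚ) = p.eval (n : ℚ) := by
  obtain ⟨p, N, hp⟩ := main_lemma k P hdown
  exact ⟨p, N, fun n hn => hp n hn⟩
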